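/- Let k be a field of characteristic 2 and let L be a 3-dimensional Lie algebra over k with basis {e, h, f} satisfying ⁅h,e⁆ = e, ⁅h,f⁆ = f, ⁅e,f⁆ = h. For an element x = a•e + b•h + c•f of L (a, b, c ∈ k), the adjoint endomorphism ad x of L is nilpotent if and only if b = 0. In other words, the nilpotent cone of 𝔰 is the plane k·e ⊕ k·f. -/

import Mathlib

/-- In the 3-dimensional Lie algebra `𝔰` over a field of characteristic 2
(basis `e = B 0`, `h = B 1`, `f = B 2` with `⁅h,e⁆ = e`, `⁅h,f⁆ = f`, `⁅e,f⁆ = h`),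
the adjoint map of `x = a•e + b•h + c•f` is nilpotent iff `b = 0`. -/
theorem stmt_2 (k : Type*) [Field k] [CharP k 2]
    (L : Type*) [LieRing L] [LieAlgebra k L]
    (B : Module.Basis (Fin 3) k L)
    (hhe : ⁅B 1, B 0⁆ = B 0) (hhf : ⁅B 1, B 2⁆ = B 2) (hef : ⁅B 0, B 2⁆ = B 1)
    (a b c : k) (x : L) (hx : x = a • B 0 + b • B 1 + c • B 2) :
    IsNilpotent (LieAlgebra.ad k L x) ↔ b = 0 := by
  have htwo : (2 : k) = 0 := CharP.cast_eq_zero k 2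
  have hneg : ∀ y : L, -y = y := fun y => by
    rw [← neg_one_smul k y, show (-1 : k) = 1 by linear_combination -htwo, one_smul]
  have heh : ⁅B 0, B 1⁆ = B 0 := by rw [← lie_skew, hhe, hneg]
  have hfh : ⁅B 2, B 1⁆ = B 2 := by rw [← lie_skew, hhf, hneg]
  have hfe : ⁅B 2, B 0⁆ = B 1 := by rw [← lie_skew, hef, hneg]
  set f := LieAlgebra.ad k L x with hf
  have hb0 : f (B 0) = b • B 0 + c • B 1 := by
    rw [LieAlgebra.ad_apply, hx, add_lie, add_lie, smul_lie, smul_lie, smul_lie,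
      lie_self, hhe, hfe, smul_zero, zero_add]
  have hb1 : f (B 1) = a • B 0 + c • B 2 := by
    rw [LieAlgebra.ad_apply, hx, add_lie, add_lie, smul_lie, smul_lie, smul_lie,
      lie_self, heh, hfh, smul_zero, add_zero]
  have hb2 : f (B 2) = a • B 1 + b • B 2 := by
    rw [LieAlgebra.ad_apply, hx, add_lie, add_lie, smul_lie, smul_lie, smul_lie,
      lie_self, hef, hhf, smul_zero, add_zero]
  constructor
  · rintro ⟨n, hn⟩
    cases n with
    | zero =>
      exfalso
      have : B 0 = 0 := by
        have := congrFun (congrArg DFunLike.coe hn) (B 0)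
        simpa using this
      exact B.ne_zero 0 this
    | succ m =>
      by_contra hb
      set w : L := a • B 0 + c • B 2 with hw
      have hfw : f w = b • w := by
        rw [hw, map_add, map_smul, map_smul, hb0, hb2]
        match_scalars
        · ring
        · linear_combination (a * c) * htwo
        · ring
      have hpow : ∀ j : ℕ, (f ^ j) w = b ^ j • w := by
        intro j
        induction j with
        | zero => simp
        | succ i ih =>
          rw [pow_succ, Module.End.mul_apply, hfw, map_smul, ih, smul_smul, ← pow_succ']
      have hzero : (b ^ m) • w = 0 := by
        have h0 : (f ^ (m + 1)) (B 1) = 0 := by rw [hn]; rfl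
        rw [pow_succ, Module.End.mul_apply, hb1, hpow] at h0
        exact h0
      have hbm : b ^ m ≠ 0 := pow_ne_zero m hb
      have hw0 : w = 0 := by
        rcases smul_eq_zero.mp hzero with h | h
        · exact absurd h hbm
        · exact h
      have hrep := congrArg B.repr hw0
      rw [hw, map_add, map_smul, map_smul, B.repr_self, B.repr_self, map_zero] at hrep
      have ha : a = 0 := by
        have := congrArg (fun g => g 0) hrep
        simpa using this
      have hc : c = 0 := by
        have := congrArg (fun g => g 2) hrep
        simpa using this
      have hb0' : f (B 0) = b • B 0 := by rw [hb0, hc, zero_smul, add_zero]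
      have hpow0 : ∀ j : ℕ, (f ^ j) (B 0) = b ^ j • B 0 := by
        intro j
        induction j with
        | zero => simp
        | succ i ih =>
          rw [pow_succ, Module.End.mul_apply, hb0', map_smul, ih, smul_smul, ← pow_succ']
      have hfin : b ^ (m + 1) • B 0 = 0 := by
        rw [← hpow0, hn]; rfl
      rcases smul_eq_zero.mp hfin with h | h
      · exact hb (pow_eq_zero_iff (Nat.succ_ne_zero m) |>.mp h)
      · exact B.ne_zero 0 h
  · intro hb
    refine ⟨3, ?_⟩
    have hb0' : f (B 0) = c • B 1 := by rw [hb0, hb, zero_smul, zero_add]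
    have hb2' : f (B 2) = a • B 1 := by rw [hb2, hb, zero_smul, add_zero]
    have hsq : (f ^ 2) (B 1) = 0 := by
      rw [pow_succ, pow_one, Module.End.mul_apply, hb1, map_add, map_smul, map_smul,
        hb0', hb2']
      match_scalars
      linear_combination (a * c) * htwo
    have h3 : f ^ 3 = f ^ 2 * f := pow_succ f 2
    have h3' : f ^ 3 = f * f ^ 2 := pow_succ' f 2
    apply B.ext
    intro i
    fin_cases i
    · show (f ^ 3) (B 0) = (0 : Module.End k L) (B 0)
      rw [h3, Module.End.mul_apply, hb0',
        map_smul, hsq, smul_zero, LinearMap.zero_apply]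
    · show (f ^ 3) (B 1) = (0 : Module.End k L) (B 1)
      rw [h3', Module.End.mul_apply, hsq,
        map_zero, LinearMap.zero_apply]
    · show (f ^ 3) (B 2) = (0 : Module.End k L) (B 2)
      rw [h3, Module.End.mul_apply, hb2',
        map_smul, hsq, smul_zero, LinearMap.zero_apply]
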